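/- Let λ_1, …, λ_d ∈ ℂ, α_1, …, α_d > 0 with α = Σα_j, t > 0, and define G(z,u) = (1/α) Σ_j α_j log|u - λ_j| + Re((z-u)²/(2t)). Then for fixed z, writing u = x + iy, the function x ↦ G(z, x + iy) is strictly convex on ℝ whenever |y| > 2·max(√t, |λ_1|, …, |λ_d|); specifically its second derivative in x is bounded below by 1/t − 4/y² > 0. -/

import Mathlib

/-- `G(z,u) = (1/α) Σ_j α_j log|u - λ_j| + Re((z-u)²/(2t))`. -/
noncomputable def Gfun (d : ℕ) (lam : Fin d → ℂ) (a : Fin d → ℝ) (A : ℝ) (t : ℝ)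
    (z u : ℂ) : ℝ :=
  (1 / A) * ∑ j, a j * Real.log ‖u - lam j‖
    + ((z - u) ^ 2 / (2 * (t : ℂ))).re

/-- For fixed `z`, writing `u = x + iy`, the function `x ↦ G(z, x + iy)` is strictly
convex on `ℝ` whenever `|y| > 2·max(√t, |λ_1|, …, |λ_d|)`; its second derivative in
`x` is bounded below by `1/t − 4/y² > 0`. -/
theorem G_strictly_convex_horizontal
    (d : ℕ) (lam : Fin d → ℂ) (a : Fin d → ℝ) (hpos : ∀ j, 0 < a j)
    (A : ℝ) (hA : A = ∑ j, a j) (t : ℝ) (ht : 0 < t) (z : ℂ) (y : ℝ)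
    (hy1 : 2 * Real.sqrt t < |y|) (hy2 : ∀ j, 2 * ‖lam j‖ < |y|) :
    StrictConvexOn ℝ Set.univ
        (fun x : ℝ => Gfun d lam a A t z (x + y * Complex.I))
    ∧ (∀ x : ℝ, 1 / t - 4 / y ^ 2 ≤
        iteratedDeriv 2 (fun x : ℝ => Gfun d lam a A t z (x + y * Complex.I)) x)
    ∧ 0 < 1 / t - 4 / y ^ 2 := by
  set b : Fin d → ℝ := fun j => (lam j).re with hb
  set s : Fin d → ℝ := fun j => (y - (lam j).im) ^ 2 with hs
  have hy0 : 0 < |y| := lt_of_le_of_lt (by positivity) hy1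
  have hy2' : 0 < y ^ 2 := by
    have : 0 < |y| ^ 2 := pow_pos hy0 2
    rwa [sq_abs] at this
  have hsy : ∀ j, y ^ 2 / 4 ≤ s j := by
    intro j
    have him : |(lam j).im| ≤ ‖lam j‖ := Complex.abs_im_le_norm _
    have h2 : |(lam j).im| < |y| / 2 := by have := hy2 j; linarith
    have h1 : |y| / 2 ≤ |y - (lam j).im| := by
      have := abs_sub_abs_le_abs_sub y (lam j).im
      linarith
    have hmul := mul_self_le_mul_self (by positivity) h1
    calc y ^ 2 / 4 = (|y| / 2) * (|y| / 2) := by rw [← sq_abs]; ring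
      _ ≤ |y - (lam j).im| * |y - (lam j).im| := hmul
      _ = s j := by rw [← abs_mul_abs_self]; simp [hs, sq]
  have hspos : ∀ j, 0 < s j := fun j => lt_of_lt_of_le (by positivity) (hsy j)
  have hD : ∀ j (x : ℝ), 0 < (x - b j) ^ 2 + s j := fun j x => by
    have := hspos j; positivity
  set f : ℝ → ℝ := fun x => Gfun d lam a A t z (x + y * Complex.I) with hf
  have hfx : ∀ x : ℝ, f x =
      (1 / A) * ∑ j, a j * ((1 / 2) * Real.log ((x - b j) ^ 2 + s j))
        + ((z.re - x) ^ 2 - (z.im - y) ^ 2) / (2 * t) := by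
    intro x
    have h1 : ∀ j, Real.log ‖(x : ℂ) + y * Complex.I - lam j‖
        = (1 / 2) * Real.log ((x - b j) ^ 2 + s j) := by
      intro j
      rw [Complex.norm_def, Real.log_sqrt (Complex.normSq_nonneg _)]
      rw [mul_comm]
      congr 2
      simp [Complex.normSq_apply, hb, hs]
      ring
    have h2 : ((z - ((x : ℂ) + y * Complex.I)) ^ 2 / (2 * (t : ℂ))).re
        = ((z.re - x) ^ 2 - (z.im - y) ^ 2) / (2 * t) := by
      rw [Complex.div_re]
      simp [Complex.normSq_apply, pow_two, Complex.mul_re, Complex.mul_im]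
      field_simp
    simp only [hf, Gfun, h2]
    congr 2
    exact Finset.sum_congr rfl fun j _ => by rw [h1 j]
  set f' : ℝ → ℝ := fun x =>
    (1 / A) * ∑ j, a j * ((x - b j) / ((x - b j) ^ 2 + s j)) + (x - z.re) / t
    with hf'
  set f'' : ℝ → ℝ := fun x =>
    (1 / A) * ∑ j, a j * ((s j - (x - b j) ^ 2) / ((x - b j) ^ 2 + s j) ^ 2) + 1 / t
    with hf''
  have hd1 : ∀ x, HasDerivAt f (f' x) x := by
    intro x
    have hsum : HasDerivAt
        (fun x : ℝ => (1 / A) * ∑ j, a j * ((1 / 2) * Real.log ((x - b j) ^ 2 + s j)))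
        ((1 / A) * ∑ j, a j * ((x - b j) / ((x - b j) ^ 2 + s j))) x := by
      refine HasDerivAt.const_mul _ ?_
      refine HasDerivAt.fun_sum fun j _ => ?_
      have hin : HasDerivAt (fun x : ℝ => (x - b j) ^ 2 + s j) (2 * (x - b j)) x := by
        have := ((hasDerivAt_id x).sub_const (b j)).pow 2
        simpa using this.add_const (s j)
      have hlog := hin.log (hD j x).ne'
      have h := (hlog.const_mul (1 / 2 : ℝ)).const_mul (a j)
      refine h.congr_deriv ?_
      field_simp
    have hquad : HasDerivAt
        (fun x : ℝ => ((z.re - x) ^ 2 - (z.im - y) ^ 2) / (2 * t))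
        ((x - z.re) / t) x := by
      have h1 : HasDerivAt (fun x : ℝ => (z.re - x) ^ 2 - (z.im - y) ^ 2)
          (2 * (z.re - x) * (-1)) x := by
        have := ((hasDerivAt_id x).const_sub z.re).pow 2
        simpa using this.sub_const ((z.im - y) ^ 2)
      have h2 := h1.div_const (2 * t)
      refine h2.congr_deriv ?_
      ring
    refine HasDerivAt.congr_of_eventuallyEq (hsum.add hquad) ?_
    filter_upwards with u using hfx u
  have hd2 : ∀ x, HasDerivAt f' (f'' x) x := by
    intro x
    have hsum : HasDerivAt
        (fun x : ℝ => (1 / A) * ∑ j, a j * ((x - b j) / ((x - b j) ^ 2 + s j)))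
        ((1 / A) * ∑ j, a j * ((s j - (x - b j) ^ 2) / ((x - b j) ^ 2 + s j) ^ 2)) x := by
      refine HasDerivAt.const_mul _ ?_
      refine HasDerivAt.fun_sum fun j _ => ?_
      have hnum : HasDerivAt (fun x : ℝ => x - b j) 1 x :=
        (hasDerivAt_id x).sub_const (b j)
      have hden : HasDerivAt (fun x : ℝ => (x - b j) ^ 2 + s j) (2 * (x - b j)) x := by
        have := ((hasDerivAt_id x).sub_const (b j)).pow 2
        simpa using this.add_const (s j)
      have h := (hnum.div hden (hD j x).ne').const_mul (a j)
      refine h.congr_deriv ?_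
      congr 1
      field_simp
      ring
    have hquad : HasDerivAt (fun x : ℝ => (x - z.re) / t) (1 / t) x := by
      have := ((hasDerivAt_id x).sub_const z.re).div_const t
      simpa using this
    exact hsum.add hquad
  have hderiv : deriv f = f' := funext fun x => (hd1 x).deriv
  have hderiv2 : ∀ x, deriv (deriv f) x = f'' x := fun x => by
    rw [hderiv]; exact (hd2 x).deriv
  have hit : ∀ x, iteratedDeriv 2 f x = f'' x := fun x => by
    rw [show (2 : ℕ) = 1 + 1 from rfl, iteratedDeriv_succ, iteratedDeriv_one]
    exact hderiv2 x
  -- lower bound for f''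
  have hterm : ∀ (j : Fin d) (x : ℝ), -(4 / y ^ 2) ≤
      (s j - (x - b j) ^ 2) / ((x - b j) ^ 2 + s j) ^ 2 := by
    intro j x
    rw [show -(4 / y ^ 2) = (-4) / y ^ 2 by ring,
      div_le_div_iff₀ hy2' (by have := hD j x; positivity)]
    have h1 : 0 ≤ ((x - b j) ^ 2 + s j) * (4 * s j - y ^ 2) := by
      have := hsy j
      have := hD j x
      nlinarith
    nlinarith [sq_nonneg (x - b j), hspos j, hsy j]
  have hAnn : 0 ≤ A := by
    rw [hA]; exact Finset.sum_nonneg fun j _ => (hpos j).le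
  have hbound : ∀ x, 1 / t - 4 / y ^ 2 ≤ f'' x := by
    intro x
    have hkey : -(4 / y ^ 2) ≤
        (1 / A) * ∑ j, a j * ((s j - (x - b j) ^ 2) / ((x - b j) ^ 2 + s j) ^ 2) := by
      rcases isEmpty_or_nonempty (Fin d) with hE | hE
      · simp [Finset.univ_eq_empty]
        positivity
      · have hApos : 0 < A := by
          rw [hA]
          exact Finset.sum_pos (fun j _ => hpos j) Finset.univ_nonempty
        have hsum : A * (-(4 / y ^ 2)) ≤
            ∑ j, a j * ((s j - (x - b j) ^ 2) / ((x - b j) ^ 2 + s j) ^ 2) := by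
          rw [hA, Finset.sum_mul]
          refine Finset.sum_le_sum fun j _ => ?_
          exact mul_le_mul_of_nonneg_left (hterm j x) (hpos j).le
        have := mul_le_mul_of_nonneg_left hsum (by positivity : (0:ℝ) ≤ 1 / A)
        calc -(4 / y ^ 2) = (1 / A) * (A * (-(4 / y ^ 2))) := by
              field_simp
          _ ≤ _ := this
    simp only [hf'']
    linarith
  have hposd : 0 < 1 / t - 4 / y ^ 2 := by
    have h4t : 4 * t < y ^ 2 := by
      have h := mul_self_lt_mul_self (by positivity) hy1
      have hsq : Real.sqrt t * Real.sqrt t = t := Real.mul_self_sqrt ht.le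
      have : |y| * |y| = y ^ 2 := by rw [← sq_abs]; ring
      nlinarith
    have : 4 / y ^ 2 < 1 / t := by
      rw [div_lt_div_iff₀ hy2' ht]
      linarith
    linarith
  refine ⟨?_, fun x => (hit x) ▸ hbound x, hposd⟩
  refine strictConvexOn_of_deriv2_pos convex_univ ?_ ?_
  · exact (continuous_iff_continuousAt.2 fun x => (hd1 x).continuousAt).continuousOn
  · intro x _
    have : deriv^[2] f x = deriv (deriv f) x := by
      simp [Function.iterate_succ, Function.comp]
    rw [this, hderiv2 x]
    exact lt_of_lt_of_le hposd (hbound x)
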